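/- arXiv:2107.06706 — 2 statements merged into one kernel-verified Lean document; each statement's English description precedes it below -/
import Mathlib

section
/- Erdős–Stone with rainbow colors, base case structure: Let H be a graph with chromatic number χ ≥ 2 and fix ε > 0. There exist n₀ and α > 0 such that: whenever G is a graph on n > n₀ vertices with minimum degree δ(G) > (1 − 1/(χ−1) + ε)n, and c : V(G) → X is a vertex coloring in which every color class has fewer than αn vertices, then G contains a (not necessarily induced) copy of H all of whose vertices receive distinct colors under c. -/
open Finset

def RainbowK {n : ℕ} (G : SimpleGraph (Fin n)) {X : Type} (c : Fin n → X) (q t : ℕ) : Prop :=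
  ∃ f : Fin q → Fin t → Fin n,
    (Function.Injective fun p : Fin q × Fin t => c (f p.1 p.2)) ∧
    ∀ i j a b, i ≠ j → G.Adj (f i a) (f j b)


lemma greedy {n : ℕ} {X : Type} [DecidableEq X] (c : Fin n → X) (α : ℝ)
    (hα : 0 < α * n)
    (hc : ∀ x : X, ((Finset.univ.filter fun v => c v = x).card : ℝ) < α * n)
    (F : Finset (Fin n)) :
    ∀ (k : ℕ) (avoid : Finset X),
      ((avoid.card + k : ℕ) : ℝ) * (α * n) ≤ F.card →
      ∃ e : Fin k → Fin n, (∀ j, e j ∈ F) ∧ Function.Injective (c ∘ e) ∧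
        ∀ j, c (e j) ∉ avoid := by
  intro k
  induction k with
  | zero =>
    intro avoid _
    exact ⟨fun j => j.elim0, fun j => j.elim0, fun j => j.elim0, fun j => j.elim0⟩
  | succ k ih =>
    intro avoid hcard
    -- find v ∈ F with c v ∉ avoid
    have hbad : ((F.filter fun v => c v ∈ avoid).card : ℝ) < F.card := by
      have h1 : (F.filter fun v => c v ∈ avoid) ⊆
          avoid.biUnion fun x => Finset.univ.filter fun v => c v = x := by
        intro v hv
        simp only [mem_filter, mem_biUnion] at hv ⊢
        exact ⟨c v, hv.2, by simp⟩
      have h2 : ((F.filter fun v => c v ∈ avoid).card : ℝ) ≤ (avoid.card : ℝ) * (α * n) := by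
        calc ((F.filter fun v => c v ∈ avoid).card : ℝ)
            ≤ ((avoid.biUnion fun x => Finset.univ.filter fun v => c v = x).card : ℝ) := by
              exact_mod_cast Finset.card_le_card h1
          _ ≤ (∑ x ∈ avoid, (Finset.univ.filter fun v => c v = x).card : ℕ) := by
              exact_mod_cast Finset.card_biUnion_le
          _ = ∑ x ∈ avoid, ((Finset.univ.filter fun v => c v = x).card : ℝ) := by
              push_cast; ring
          _ ≤ ∑ _x ∈ avoid, (α * n) := Finset.sum_le_sum fun x _ => (hc x).le
          _ = (avoid.card : ℝ) * (α * n) := by rw [Finset.sum_const, nsmul_eq_mul]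
      have h3 : (avoid.card : ℝ) * (α * n) < ((avoid.card + (k+1) : ℕ) : ℝ) * (α * n) := by
        apply mul_lt_mul_of_pos_right _ hα
        push_cast; linarith
      linarith
    have hne : ∃ v, v ∈ F ∧ c v ∉ avoid := by
      by_contra h
      push_neg at h
      have : F ⊆ F.filter fun v => c v ∈ avoid := by
        intro v hv; simp only [mem_filter]; exact ⟨hv, h v hv⟩
      have := Finset.card_le_card this
      exact absurd this (by exact_mod_cast not_le.mpr hbad)
    obtain ⟨v, hvF, hvav⟩ := hne
    have hcard' : (((insert (c v) avoid).card + k : ℕ) : ℝ) * (α * n) ≤ F.card := by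
      refine le_trans (mul_le_mul_of_nonneg_right ?_ hα.le) hcard
      have := Finset.card_insert_le (c v) avoid
      exact_mod_cast by omega
    obtain ⟨e', he'F, he'inj, he'av⟩ := ih (insert (c v) avoid) hcard'
    refine ⟨Fin.cons v e', ?_, ?_, ?_⟩
    · intro j
      refine Fin.cases ?_ ?_ j
      · simpa using hvF
      · intro i; simpa using he'F i
    · intro i j
      refine Fin.cases ?_ ?_ i <;> [skip; intro i'] <;> refine Fin.cases ?_ ?_ j
      · intro _; rfl
      · intro j' hij
        exfalso
        simp only [Function.comp_apply, Fin.cons_zero, Fin.cons_succ] at hij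
        exact he'av j' (by rw [← hij]; exact Finset.mem_insert_self _ _)
      · intro hij
        exfalso
        simp only [Function.comp_apply, Fin.cons_zero, Fin.cons_succ] at hij
        exact he'av i' (by rw [hij]; exact Finset.mem_insert_self _ _)
      · intro j' hij
        simp only [Function.comp_apply, Fin.cons_succ] at hij
        have : i' = j' := he'inj hij
        rw [this]
    · intro j
      refine Fin.cases ?_ ?_ j
      · simpa using hvav
      · intro i
        have := he'av i
        simp only [Fin.cons_succ]
        intro h
        exact this (Finset.mem_insert_of_mem h)

lemma arith_key (ε Q S T NN b D : ℝ) (hε : 0 < ε) (hQ : 1 ≤ Q) (hS : 1 ≤ S) (hT : 1 ≤ T)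
    (hN : 0 ≤ NN) (hb : 0 ≤ b) (hbn : b ≤ NN) (hεs : 2*T+2 ≤ ε*S)
    (h1 : (1 - 1/Q + ε)*NN ≤ D)
    (h2 : Q*S*D ≤ b*(Q*S) + (NN - b)*((Q-1)*S + T - 1)) : 2*NN ≤ b*S := by
  have hQ0 : (0:ℝ) < Q := by linarith
  have e2 : Q*S*((1-1/Q+ε)*NN) ≤ Q*S*D := by
    apply mul_le_mul_of_nonneg_left h1
    nlinarith
  have e1 : Q*S*((1-1/Q+ε)*NN) = Q*S*NN - S*NN + ε*Q*S*NN := by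
    have h1q : Q * (1/Q) = 1 := by rw [mul_one_div, div_self (ne_of_gt hQ0)]
    linear_combination (-S*NN) * h1q
  rw [e1] at e2
  nlinarith [mul_nonneg hb (by linarith : (0:ℝ) ≤ T - 1),
    mul_nonneg (mul_nonneg (mul_nonneg hε.le (by linarith : (0:ℝ) ≤ S)) (by linarith : (0:ℝ) ≤ Q - 1)) hN,
    mul_le_mul_of_nonneg_right hεs hN]

lemma arith_key2 (Cr Sr Qr Tr nr av fr kr α : ℝ)
    (hC : 1 ≤ Cr) (hS : 1 ≤ Sr) (hQ : 1 ≤ Qr) (hT : 0 ≤ Tr)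
    (hav : av ≤ Qr*Sr) (hα : α = 1/(2*Cr*Sr*(Qr*Sr+Tr+1)))
    (hn2 : 2*Cr*Sr < nr)
    (hnk : nr < (kr+1)*(Cr*Sr))
    (hkF : kr + 1 ≤ fr) : (av + Tr)*(α*nr) ≤ fr := by
  have hCS : (0:ℝ) < Cr*Sr := by nlinarith
  have hM : (0:ℝ) < Qr*Sr+Tr+1 := by nlinarith
  have hn0 : (0:ℝ) ≤ nr := by nlinarith
  have hα0 : 0 < α := by rw [hα]; positivity
  have h1 : (av + Tr)*(α*nr) ≤ (Qr*Sr+Tr+1)*(α*nr) := by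
    have h : av + Tr ≤ Qr*Sr+Tr+1 := by nlinarith
    exact mul_le_mul_of_nonneg_right h (mul_nonneg hα0.le hn0)
  have h2 : (Qr*Sr+Tr+1)*(α*nr) = nr/(2*Cr*Sr) := by
    rw [hα]
    field_simp
  have h3 : nr/(2*Cr*Sr) + 1 ≤ nr/(Cr*Sr) := by
    rw [div_add' _ _ _ (by nlinarith : (2*Cr*Sr) ≠ 0), div_le_div_iff₀ (by nlinarith) hCS]
    nlinarith
  have h4 : nr/(Cr*Sr) < kr + 1 := by
    rw [div_lt_iff₀ hCS]
    nlinarith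
  linarith

lemma natcard_classes {n : ℕ} {X : Type} (c : Fin n → X) (x : X) [DecidablePred fun v : Fin n => c v = x] :
    Nat.card {v : Fin n // c v = x} = (Finset.univ.filter fun v => c v = x).card := by
  rw [Nat.card_eq_fintype_card]
  convert Fintype.card_subtype (fun v : Fin n => c v = x)

lemma step_lemma {q t : ℕ} (hq : 1 ≤ q) {ε : ℝ} (hε : 0 < ε) :
    ∃ s n₀ : ℕ, ∃ α : ℝ, 0 < α ∧
      ∀ n, n₀ < n → ∀ (G : SimpleGraph (Fin n)) (_ : DecidableRel G.Adj),
        (1 - 1/(q:ℝ) + ε) * n ≤ G.minDegree →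
        ∀ (X : Type) (c : Fin n → X),
          (∀ x : X, (Nat.card {v : Fin n // c v = x} : ℝ) < α * n) →
          RainbowK G c q s → RainbowK G c (q+1) t := by
  classical
  by_cases ht : t = 0
  · subst ht
    refine ⟨1, 0, 1, one_pos, fun n hn G _ hδ X c hc _ => ?_⟩
    exact ⟨fun _ a => a.elim0, fun p => p.2.elim0, fun i j a => a.elim0⟩
  have ht1 : 1 ≤ t := Nat.one_le_iff_ne_zero.mpr ht
  set s : ℕ := (2*t + 2) * (⌈1/ε⌉₊ + 1) with hs_def
  set C : ℕ := (s.choose t)^q with hC_def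
  have hts : t ≤ s := by
    have : 1 ≤ ⌈1/ε⌉₊ + 1 := by omega
    calc t ≤ (2*t+2) * 1 := by omega
    _ ≤ s := by rw [hs_def]; exact Nat.mul_le_mul_left _ this
  have hs1 : 1 ≤ s := le_trans ht1 hts
  have hεs : (2*t + 2 : ℝ) ≤ ε * s := by
    have h1 : (1:ℝ)/ε ≤ (⌈1/ε⌉₊ + 1 : ℕ) := by
      push_cast
      have := Nat.le_ceil (1/ε)
      linarith
    have h2 : (1:ℝ) ≤ ε * (⌈1/ε⌉₊ + 1 : ℕ) := by
      rw [div_le_iff₀ hε] at h1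
      linarith
    calc (2*t+2 : ℝ) = (2*t+2) * 1 := by ring
      _ ≤ (2*t+2) * (ε * (⌈1/ε⌉₊ + 1 : ℕ)) := by
          apply mul_le_mul_of_nonneg_left h2; positivity
      _ = ε * s := by rw [hs_def]; push_cast; ring
  have hC1 : 1 ≤ C := Nat.one_le_pow _ _ (Nat.choose_pos hts)
  refine ⟨s, 2*C*s, 1/(2*C*s*(q*s+t+1)), by positivity, ?_⟩
  set α : ℝ := 1/(2*C*s*(q*s+t+1)) with hα_def
  intro n hn G decG hδ X c hc hRain
  clear_value s C α
  have hn1 : 1 ≤ n := by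
    have := hn
    have : 1 ≤ 2*C*s := by
      have := hC1; have := hs1; nlinarith
    omega
  have hcf : ∀ x : X, ((Finset.univ.filter fun v => c v = x).card : ℝ) < α * n := by
    intro x
    rw [← natcard_classes]
    exact hc x
  obtain ⟨f, hfc, hfadj⟩ := hRain
  have hfinj : Function.Injective (fun p : Fin q × Fin s => f p.1 p.2) := by
    intro p p' h
    exact hfc (by simp only [h])
  set P : Fin q → Finset (Fin n) := fun i => Finset.univ.image (f i) with hP_def
  have hPcard : ∀ i, (P i).card = s := by
    intro i
    rw [hP_def]
    rw [Finset.card_image_of_injective _ (fun a b hab => by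
      have : (⟨i,a⟩ : Fin q × Fin s) = ⟨i,b⟩ := hfinj hab
      exact (Prod.mk.injEq _ _ _ _).mp this |>.2)]
    simp
  have hPmem : ∀ i u, u ∈ P i → ∃ a, f i a = u := by
    intro i u hu
    rw [hP_def] at hu
    simpa using Finset.mem_image.mp hu
  have hPdisj : ∀ i j, i ≠ j → Disjoint (P i) (P j) := by
    intro i j hij
    rw [Finset.disjoint_left]
    intro u hui huj
    obtain ⟨a, ha⟩ := hPmem i u hui
    obtain ⟨b, hb⟩ := hPmem j u huj
    have := hfadj i j a b hij
    rw [ha, hb] at this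
    exact G.loopless.irrefl u this
  set W : Finset (Fin n) := Finset.univ.biUnion P with hW_def
  have hWcard : W.card = q * s := by
    rw [hW_def, Finset.card_biUnion (fun i _ j _ hij => hPdisj i j hij)]
    simp [hPcard, Finset.sum_const]
  have hPW : ∀ i, P i ⊆ W := by
    intro i u hu
    rw [hW_def]
    exact Finset.mem_biUnion.mpr ⟨i, Finset.mem_univ i, hu⟩
  have cW : Set.InjOn c ↑W := by
    intro u hu w hw hcuw
    simp only [hW_def, Finset.coe_biUnion, Set.mem_iUnion, Finset.mem_coe] at hu hw
    obtain ⟨i, _, hui⟩ := hu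
    obtain ⟨j, _, hwj⟩ := hw
    obtain ⟨a, ha⟩ := hPmem i u hui
    obtain ⟨b, hb⟩ := hPmem j w hwj
    rw [← ha, ← hb] at hcuw ⊢
    have hpair : (⟨i,a⟩ : Fin q × Fin s) = ⟨j,b⟩ := hfc hcuw
    exact congrArg (fun p : Fin q × Fin s => f p.1 p.2) hpair
  -- counting
  set N : Fin n → ℕ := fun v => (W.filter fun w => G.Adj v w).card with hN_def
  have h1 : W.card * G.minDegree ≤ ∑ v : Fin n, N v := by
    have e1 : ∑ v : Fin n, N v = ∑ w ∈ W, (Finset.univ.filter fun v => G.Adj v w).card := by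
      simp only [hN_def, Finset.card_filter]
      rw [Finset.sum_comm' ]
      · simp
    have e2 : ∀ w, (Finset.univ.filter fun v => G.Adj v w).card = G.degree w := by
      intro w
      rw [← SimpleGraph.card_neighborFinset_eq_degree]
      congr 1
      ext v
      simp [SimpleGraph.mem_neighborFinset, SimpleGraph.adj_comm]
    rw [e1]
    calc W.card * G.minDegree = ∑ _w ∈ W, G.minDegree := by rw [Finset.sum_const, smul_eq_mul]
      _ ≤ ∑ w ∈ W, G.degree w := Finset.sum_le_sum fun w _ => G.minDegree_le_degree w
      _ = ∑ w ∈ W, (Finset.univ.filter fun v => G.Adj v w).card := by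
          exact Finset.sum_congr rfl fun w _ => (e2 w).symm
  set θ : ℕ := (q-1)*s + t with hθ_def
  have hθ1 : 1 ≤ θ := by omega
  set B : Finset (Fin n) := Finset.univ.filter fun v => θ ≤ N v with hB_def
  have hNle : ∀ v, N v ≤ q * s := by
    intro v
    rw [hN_def, ← hWcard]
    exact Finset.card_le_card (Finset.filter_subset _ _)
  have h2 : ∑ v : Fin n, N v ≤ B.card * (q*s) + (n - B.card) * (θ - 1) := by
    rw [← Finset.sum_filter_add_sum_filter_not Finset.univ (fun v => θ ≤ N v) N]
    have hb1 : ∑ v ∈ B, N v ≤ B.card * (q*s) := by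
      calc ∑ v ∈ B, N v ≤ ∑ _v ∈ B, q*s := Finset.sum_le_sum fun v _ => hNle v
        _ = B.card * (q*s) := by rw [Finset.sum_const, smul_eq_mul]
    have hb2 : ∑ v ∈ Finset.univ.filter (fun v => ¬ θ ≤ N v), N v ≤ (n - B.card) * (θ-1) := by
      have hcard2 : (Finset.univ.filter (fun v => ¬ θ ≤ N v)).card = n - B.card := by
        have := Finset.card_filter_add_card_filter_not (s := (Finset.univ : Finset (Fin n))) (p := fun v => θ ≤ N v)
        simp only [Finset.card_univ, Fintype.card_fin] at this
        rw [← hB_def] at this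
        omega
      calc ∑ v ∈ Finset.univ.filter (fun v => ¬ θ ≤ N v), N v
          ≤ ∑ _v ∈ Finset.univ.filter (fun v => ¬ θ ≤ N v), (θ-1) := by
            refine Finset.sum_le_sum fun v hv => ?_
            have := (Finset.mem_filter.mp hv).2
            omega
        _ = (n - B.card) * (θ-1) := by rw [Finset.sum_const, smul_eq_mul, hcard2]
    exact Nat.add_le_add hb1 hb2
  have hBn : B.card ≤ n := by
    calc B.card ≤ (Finset.univ : Finset (Fin n)).card := Finset.card_le_card (Finset.filter_subset _ _)
      _ = n := by simp
  clear_value θ N B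
  -- real arithmetic: 2n ≤ B.card * s
  have hBcard : 2*(n:ℝ) ≤ (B.card : ℝ) * s := by
    have hh : ((W.card * G.minDegree : ℕ) : ℝ) ≤ ((B.card * (q*s) + (n - B.card) * (θ - 1) : ℕ) : ℝ) :=
      Nat.cast_le.mpr (le_trans h1 h2)
    rw [hWcard] at hh
    have hθ1' : 1 ≤ (q-1)*s + t := by omega
    push_cast [hθ_def, Nat.cast_sub hBn, Nat.cast_sub hq, Nat.cast_sub hθ1'] at hh
    have hh2 : (q:ℝ)*(s:ℝ)*(G.minDegree:ℝ) ≤ (B.card:ℝ)*((q:ℝ)*(s:ℝ)) + ((n:ℝ)-(B.card:ℝ))*(((q:ℝ)-1)*(s:ℝ) + (t:ℝ) - 1) := by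
      linarith [hh]
    exact arith_key ε q s t n B.card G.minDegree hε (by exact_mod_cast hq)
      (by exact_mod_cast hs1) (by exact_mod_cast ht1) (Nat.cast_nonneg n)
      (Nat.cast_nonneg _) (Nat.cast_le.mpr hBn) hεs hδ hh2
  -- per-part neighbor bound
  have hpart : ∀ v ∈ B, ∀ i, t ≤ ((P i).filter fun w => G.Adj v w).card := by
    intro v hv i
    have hθN : θ ≤ N v := by
      rw [hB_def] at hv
      exact (Finset.mem_filter.mp hv).2
    have hNsum : N v = ∑ j : Fin q, ((P j).filter fun w => G.Adj v w).card := by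
      rw [hN_def]
      simp only
      rw [hW_def, Finset.filter_biUnion]
      rw [Finset.card_biUnion]
      intro j _ j' _ hjj'
      exact Finset.disjoint_filter_filter (hPdisj j j' hjj')
    have hle_s : ∀ j, ((P j).filter fun w => G.Adj v w).card ≤ s := by
      intro j
      rw [← hPcard j]
      exact Finset.card_le_card (Finset.filter_subset _ _)
    have hsum_split : ∑ j : Fin q, ((P j).filter fun w => G.Adj v w).card
        = ((P i).filter fun w => G.Adj v w).card
          + ∑ j ∈ Finset.univ.erase i, ((P j).filter fun w => G.Adj v w).card := by
      exact (Finset.add_sum_erase _ _ (Finset.mem_univ i)).symm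
    have herase : ∑ j ∈ Finset.univ.erase i, ((P j).filter fun w => G.Adj v w).card ≤ (q-1) * s := by
      calc ∑ j ∈ Finset.univ.erase i, ((P j).filter fun w => G.Adj v w).card
          ≤ ∑ _j ∈ Finset.univ.erase i, s := Finset.sum_le_sum fun j _ => hle_s j
        _ = (q-1) * s := by
            rw [Finset.sum_const, smul_eq_mul]
            congr 1
            rw [Finset.card_erase_of_mem (Finset.mem_univ i)]
            simp
    have : (q-1)*s + t ≤ ((P i).filter fun w => G.Adj v w).card + (q-1)*s := by
      calc (q-1)*s + t = θ := hθ_def.symm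
        _ ≤ N v := hθN
        _ = _ := by rw [hNsum, hsum_split]
        _ ≤ _ := Nat.add_le_add_left herase _
    omega
  -- choose t-subsets of neighbours in each part
  set g : Fin n → Fin q → Finset (Fin n) := fun v i =>
    if h : t ≤ ((P i).filter fun w => G.Adj v w).card
    then (Finset.exists_subset_card_eq h).choose else ∅ with hg_def
  have hg1 : ∀ v ∈ B, ∀ i, g v i ⊆ (P i).filter (fun w => G.Adj v w) ∧ (g v i).card = t := by
    intro v hv i
    have h := hpart v hv i
    rw [hg_def]
    simp only [dif_pos h]
    obtain ⟨h1', h2'⟩ := (Finset.exists_subset_card_eq h).choose_spec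
    exact ⟨h1', h2'⟩
  clear_value g
  set T : Finset (Fin q → Finset (Fin n)) := Fintype.piFinset (fun i : Fin q => (P i).powersetCard t) with hT_def
  have hgT : ∀ v ∈ B, g v ∈ T := by
    intro v hv
    rw [hT_def, Fintype.mem_piFinset]
    intro i
    rw [Finset.mem_powersetCard]
    obtain ⟨h1', h2'⟩ := hg1 v hv i
    exact ⟨le_trans h1' (Finset.filter_subset _ _), h2'⟩
  have hTcard : T.card = C := by
    rw [hT_def, Fintype.card_piFinset]
    rw [hC_def]
    rw [Finset.prod_congr rfl fun i _ => by rw [Finset.card_powersetCard, hPcard i]]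
    simp [Finset.prod_const]
  -- pigeonhole
  set k : ℕ := n / (C*s) with hk_def
  have hCs0 : 0 < C*s := Nat.mul_pos hC1 hs1
  have hnk : n < (k+1)*(C*s) := by
    have h1' := Nat.div_add_mod n (C*s)
    have h2' : n % (C*s) < C*s := Nat.mod_lt _ hCs0
    calc n = (C*s)*k + n%(C*s) := by rw [hk_def]; omega
      _ < (C*s)*k + (C*s) := by omega
      _ = (k+1)*(C*s) := by ring
  have hCR1 : (1:ℝ) ≤ C := by exact_mod_cast hC1
  have hSR1 : (1:ℝ) ≤ s := by exact_mod_cast hs1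
  have hQR1 : (1:ℝ) ≤ q := by exact_mod_cast hq
  have hkR : (k:ℝ) ≤ (n:ℝ)/((C:ℝ)*(s:ℝ)) := by
    have h := Nat.cast_div_le (α := ℝ) (m := n) (n := C*s)
    rw [← hk_def] at h
    push_cast at h
    exact h
  have hCk : T.card * k < B.card := by
    have hr : ((C * k : ℕ):ℝ) < (B.card:ℝ) := by
      have hC0 : (C:ℝ) ≠ 0 := by linarith
      have hs0 : (0:ℝ) < s := by linarith
      have e1 : (C:ℝ) * ((n:ℝ)/((C:ℝ)*(s:ℝ))) = (n:ℝ)/(s:ℝ) := by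
        rw [← mul_div_assoc, mul_div_mul_left _ _ hC0]
      have h2' : (n:ℝ)/(s:ℝ) < B.card := by
        rw [div_lt_iff₀ hs0]
        have hn0' : (1:ℝ) ≤ n := by exact_mod_cast hn1
        nlinarith [hBcard]
      have h3' : (C:ℝ)*(k:ℝ) ≤ (n:ℝ)/(s:ℝ) := by
        calc (C:ℝ)*(k:ℝ) ≤ (C:ℝ) * ((n:ℝ)/((C:ℝ)*(s:ℝ))) := by
              apply mul_le_mul_of_nonneg_left hkR (by linarith)
          _ = (n:ℝ)/(s:ℝ) := e1
      push_cast
      linarith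
    rw [hTcard]
    exact_mod_cast hr
  obtain ⟨y, hyT, hky⟩ := Finset.exists_lt_card_fiber_of_mul_lt_card_of_maps_to hgT hCk
  set F : Finset (Fin n) := B.filter fun v => g v = y with hF_def
  have hky' : k < F.card := hky
  have hyP : ∀ i, y i ⊆ P i ∧ (y i).card = t := by
    rw [hT_def, Fintype.mem_piFinset] at hyT
    intro i
    exact Finset.mem_powersetCard.mp (hyT i)
  have hyW : ∀ i, ∀ w ∈ y i, w ∈ W := fun i w hw => hPW i ((hyP i).1 hw)
  have hFadj : ∀ v ∈ F, ∀ i, ∀ w ∈ y i, G.Adj v w := by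
    intro v hv i w hw
    rw [hF_def, Finset.mem_filter] at hv
    obtain ⟨hvB, hgy⟩ := hv
    have hsub := (hg1 v hvB i).1
    rw [hgy] at hsub
    exact (Finset.mem_filter.mp (hsub hw)).2
  set avoid : Finset X := W.image c with hav_def
  have hav : avoid.card ≤ q*s := le_trans Finset.card_image_le (le_of_eq hWcard)
  have hn0' : (0:ℝ) < n := by exact_mod_cast hn1
  have hα0 : 0 < α*n := mul_pos (by rw [hα_def]; positivity) hn0'
  have hbound : ((avoid.card + t : ℕ):ℝ) * (α*n) ≤ F.card := by
    push_cast
    apply arith_key2 C s q t n avoid.card F.card k α hCR1 hSR1 hQR1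
      (Nat.cast_nonneg t) ?_ hα_def ?_ ?_ ?_
    · calc ((avoid.card:ℝ)) ≤ ((q*s : ℕ):ℝ) := Nat.cast_le.mpr hav
        _ = (q:ℝ)*(s:ℝ) := by push_cast; ring
    · exact_mod_cast hn
    · exact_mod_cast hnk
    · exact_mod_cast hky'
  obtain ⟨e, heF, hecinj, heav⟩ := greedy c α hα0 hcf F t avoid hbound
  -- build the final configuration
  set f' : Fin (q+1) → Fin t → Fin n := fun i a =>
    if h : (i:ℕ) < q then ((y ⟨i.1, h⟩).orderIsoOfFin (hyP ⟨i.1,h⟩).2 a : Fin n) else e a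
    with hf'_def
  have hmem : ∀ (i : Fin (q+1)) (h : (i:ℕ) < q) (a : Fin t), f' i a ∈ y ⟨i.1, h⟩ := by
    intro i h a
    rw [hf'_def]
    simp only [dif_pos h]
    exact Finset.coe_mem _
  have hlast : ∀ (i : Fin (q+1)) (_ : ¬ (i:ℕ) < q) (a : Fin t), f' i a = e a := by
    intro i h a
    rw [hf'_def]
    simp only [dif_neg h]
  refine ⟨f', ?_, ?_⟩
  · -- injectivity of colors
    rintro ⟨i, a⟩ ⟨j, b⟩ hcc
    simp only at hcc
    by_cases hi : (i:ℕ) < q <;> by_cases hj : (j:ℕ) < q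
    · have hu := hmem i hi a
      have hw := hmem j hj b
      have huW : f' i a ∈ W := hyW _ _ hu
      have hwW : f' j b ∈ W := hyW _ _ hw
      have huw : f' i a = f' j b := cW (Finset.mem_coe.mpr huW) (Finset.mem_coe.mpr hwW) hcc
      have hij0 : i = j := by
        have hq0 : (⟨i.1,hi⟩ : Fin q) = ⟨j.1,hj⟩ := by
          by_contra hne
          have hdis := hPdisj _ _ hne
          exact Finset.disjoint_left.mp hdis ((hyP _).1 hu) ((hyP _).1 (huw ▸ hw))
        exact Fin.ext (congrArg (Fin.val : Fin q → ℕ) hq0)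
      subst hij0
      have hab : a = b := by
        have h1 : (((y ⟨i.1,hi⟩).orderIsoOfFin (hyP ⟨i.1,hi⟩).2 a : Fin n))
            = (((y ⟨i.1,hi⟩).orderIsoOfFin (hyP ⟨i.1,hi⟩).2 b : Fin n)) := by
          rw [hf'_def] at huw
          simpa [dif_pos hi] using huw
        exact (Finset.orderIsoOfFin _ _).injective (Subtype.coe_injective h1)
      rw [hab]
    · exfalso
      have huW : f' i a ∈ W := hyW _ _ (hmem i hi a)
      rw [hlast j hj b] at hcc
      exact heav b (by rw [hav_def, ← hcc]; exact Finset.mem_image_of_mem c huW)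
    · exfalso
      have hwW : f' j b ∈ W := hyW _ _ (hmem j hj b)
      rw [hlast i hi a] at hcc
      exact heav a (by rw [hav_def, hcc]; exact Finset.mem_image_of_mem c hwW)
    · have hij0 : i = j := by
        have h1 := i.isLt
        have h2 := j.isLt
        exact Fin.ext (by omega)
      subst hij0
      have hab : a = b := hecinj (by
        rw [hlast i hi a, hlast i hj b] at hcc
        exact hcc)
      rw [hab]
  · -- adjacency
    intro i j a b hij
    by_cases hi : (i:ℕ) < q <;> by_cases hj : (j:ℕ) < q
    · have hne : (⟨i.1,hi⟩ : Fin q) ≠ ⟨j.1,hj⟩ := by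
        intro h
        exact hij (Fin.ext (congrArg (Fin.val : Fin q → ℕ) h))
      obtain ⟨a', ha'⟩ := hPmem _ _ ((hyP _).1 (hmem i hi a))
      obtain ⟨b', hb'⟩ := hPmem _ _ ((hyP _).1 (hmem j hj b))
      rw [← ha', ← hb']
      exact hfadj _ _ _ _ hne
    · rw [hlast j hj b]
      exact (hFadj (e b) (heF b) _ _ (hmem i hi a)).symm
    · rw [hlast i hi a]
      exact hFadj (e a) (heF a) _ _ (hmem j hj b)
    · exfalso
      have h1 := i.isLt
      have h2 := j.isLt
      exact hij (Fin.ext (by omega))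
lemma haveP : ∀ r : ℕ, 1 ≤ r → ∀ (t : ℕ) {ε : ℝ}, 0 < ε →
    ∃ n₀ : ℕ, ∃ α : ℝ, 0 < α ∧ ∀ n, n₀ < n → ∀ (G : SimpleGraph (Fin n)) (_ : DecidableRel G.Adj),
      (1 - 1/(r:ℝ) + ε) * n ≤ G.minDegree →
      ∀ (X : Type) (c : Fin n → X),
        (∀ x : X, (Nat.card {v : Fin n // c v = x} : ℝ) < α * n) →
        RainbowK G c r t := by
  intro r
  induction r with
  | zero => omega
  | succ r ih =>
    intro _ t ε hε
    rcases Nat.eq_zero_or_pos r with h0 | hr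
    · -- base case : one part, just t distinctly colored vertices
      subst h0
      refine ⟨0, 1/(t+1), by positivity, ?_⟩
      intro n hn G dec hδ X c hc
      classical
      have hn0' : (0:ℝ) < n := by exact_mod_cast hn
      have hα0 : 0 < (1/((t:ℝ)+1))*n := by positivity
      have hcf : ∀ x : X, ((Finset.univ.filter fun v => c v = x).card : ℝ) < (1/((t:ℝ)+1)) * n := by
        intro x
        rw [← natcard_classes]
        exact hc x
      have hbound : (((∅ : Finset X).card + t : ℕ):ℝ) * ((1/((t:ℝ)+1))*n) ≤ (Finset.univ : Finset (Fin n)).card := by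
        simp only [Finset.card_empty, Finset.card_univ, Fintype.card_fin]
        push_cast
        rw [zero_add]
        have h1 : (t:ℝ)/((t:ℝ)+1) ≤ 1 := by
          rw [div_le_one (by positivity)]
          linarith
        calc (t:ℝ) * (1/((t:ℝ)+1)*n) = ((t:ℝ)/((t:ℝ)+1)) * n := by ring
          _ ≤ 1 * n := mul_le_mul_of_nonneg_right h1 (by positivity)
          _ = n := one_mul _
      obtain ⟨e, heF, hecinj, heav⟩ := greedy c (1/((t:ℝ)+1)) hα0 hcf Finset.univ t ∅ hbound
      refine ⟨fun _ a => e a, ?_, ?_⟩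
      · rintro ⟨i, a⟩ ⟨j, b⟩ hcc
        simp only at hcc
        have hab : a = b := hecinj hcc
        have hij : i = j := Fin.ext (by omega)
        rw [hab, hij]
      · intro i j a b hij
        exact absurd (Fin.ext (by omega) : i = j) hij
    · obtain ⟨s, n₀₂, α₂, hα₂, hstep⟩ := step_lemma (q := r) (t := t) hr hε
      obtain ⟨n₀₁, α₁, hα₁, hhave⟩ := ih hr s hε
      refine ⟨max n₀₁ n₀₂, min α₁ α₂, lt_min hα₁ hα₂, ?_⟩
      intro n hn G dec hδ X c hc
      have hn0' : (0:ℝ) ≤ n := Nat.cast_nonneg n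
      have hrR : (1:ℝ) ≤ r := by exact_mod_cast hr
      have hδ' : (1 - 1/(r:ℝ) + ε) * n ≤ G.minDegree := by
        refine le_trans (mul_le_mul_of_nonneg_right ?_ hn0') hδ
        have h1 : (1:ℝ)/(((r:ℕ)+1:ℕ):ℝ) ≤ 1/(r:ℝ) := by
          apply one_div_le_one_div_of_le (by linarith)
          push_cast
          linarith
        push_cast at h1 ⊢
        linarith
      have hc₁ : ∀ x : X, (Nat.card {v : Fin n // c v = x} : ℝ) < α₁ * n :=
        fun x => lt_of_lt_of_le (hc x) (mul_le_mul_of_nonneg_right (min_le_left _ _) hn0')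
      have hc₂ : ∀ x : X, (Nat.card {v : Fin n // c v = x} : ℝ) < α₂ * n :=
        fun x => lt_of_lt_of_le (hc x) (mul_le_mul_of_nonneg_right (min_le_right _ _) hn0')
      exact hstep n (lt_of_le_of_lt (le_max_right _ _) hn) G dec hδ' X c hc₂
        (hhave n (lt_of_le_of_lt (le_max_left _ _) hn) G dec hδ' X c hc₁)

/-- rainbow Erdős–Stone: if `H` has chromatic number `χ ≥ 2` and `ε > 0`,
there are `n₀` and `α > 0` such that any graph `G` on `n > n₀` vertices with minimum degree
`δ(G) > (1 − 1/(χ−1) + ε)n`, together with any vertex coloring whose color classes all have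
fewer than `αn` vertices, contains a (not necessarily induced) copy of `H` whose vertices
get pairwise distinct colors. -/
theorem stmt10 {A : Type*} [Fintype A] (H : SimpleGraph A) (χ : ℕ) (hχ2 : 2 ≤ χ)
    (hχ : H.chromaticNumber = (χ : ℕ∞)) (ε : ℝ) (hε : 0 < ε) :
    ∃ (n₀ : ℕ) (α : ℝ), 0 < α ∧
      ∀ n : ℕ, n₀ < n → ∀ (G : SimpleGraph (Fin n)), ∀ (_ : DecidableRel G.Adj),
        (1 - 1 / ((χ : ℝ) - 1) + ε) * n < (G.minDegree : ℝ) →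
        ∀ (X : Type) (c : Fin n → X),
          (∀ x : X, (Nat.card {v : Fin n // c v = x} : ℝ) < α * n) →
          ∃ φ : A → Fin n, Function.Injective φ ∧
            (∀ u v, H.Adj u v → G.Adj (φ u) (φ v)) ∧
            Function.Injective (c ∘ φ) := by
  have hr : 1 ≤ χ - 1 := by omega
  obtain ⟨s, n₀₂, α₂, hα₂, hstep⟩ := step_lemma (q := χ - 1) (t := Fintype.card A) hr hε
  obtain ⟨n₀₁, α₁, hα₁, hhave⟩ := haveP (χ - 1) hr s hε
  refine ⟨max n₀₁ n₀₂, min α₁ α₂, lt_min hα₁ hα₂, ?_⟩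
  intro n hn G dec hδ X c hc
  have hn0' : (0:ℝ) ≤ n := Nat.cast_nonneg n
  have hcast : ((χ - 1 : ℕ):ℝ) = (χ:ℝ) - 1 := by
    push_cast [Nat.cast_sub (by omega : 1 ≤ χ)]
    ring
  have hδ' : (1 - 1/((χ - 1 : ℕ):ℝ) + ε) * n ≤ G.minDegree := by
    rw [hcast]
    exact hδ.le
  have hc₁ : ∀ x : X, (Nat.card {v : Fin n // c v = x} : ℝ) < α₁ * n :=
    fun x => lt_of_lt_of_le (hc x) (mul_le_mul_of_nonneg_right (min_le_left _ _) hn0')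
  have hc₂ : ∀ x : X, (Nat.card {v : Fin n // c v = x} : ℝ) < α₂ * n :=
    fun x => lt_of_lt_of_le (hc x) (mul_le_mul_of_nonneg_right (min_le_right _ _) hn0')
  have hK : RainbowK G c ((χ - 1) + 1) (Fintype.card A) :=
    hstep n (lt_of_le_of_lt (le_max_right _ _) hn) G dec hδ' X c hc₂
      (hhave n (lt_of_le_of_lt (le_max_left _ _) hn) G dec hδ' X c hc₁)
  have hχ1 : (χ - 1) + 1 = χ := by omega
  rw [hχ1] at hK
  obtain ⟨f, hfc, hfadj⟩ := hK
  have hcol : H.Colorable χ := SimpleGraph.chromaticNumber_le_iff_colorable.mp (le_of_eq hχ)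
  let CH := hcol.some
  let eA := Fintype.equivFin A
  refine ⟨fun a => f (CH a) (eA a), ?_, ?_, ?_⟩
  · intro u v huv
    have := hfc (a₁ := (CH u, eA u)) (a₂ := (CH v, eA v)) (by simpa using congrArg c huv)
    have h2 : eA u = eA v := ((Prod.mk.injEq _ _ _ _).mp this).2
    exact eA.injective h2
  · intro u v huv
    exact hfadj _ _ _ _ (CH.valid huv)
  · intro u v huv
    simp only [Function.comp_apply] at huv
    have := hfc (a₁ := (CH u, eA u)) (a₂ := (CH v, eA v)) huv
    exact eA.injective ((Prod.mk.injEq _ _ _ _).mp this).2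
end

section
/- If F is a family of graphs with χ(F) := min{χ(F) : F ∈ F} ≥ 2 (so F contains no anti-clique, i.e., no edgeless graph), then for every graph G on n vertices there is a spanning subgraph G′ of G which contains no member of F as an induced subgraph and satisfies |E(G)| − |E(G′)| ≤ |E(G)|/(χ(F)−1). Consequently, ed_{Forb(F)}(p) ≤ p/(χ(F)−1) for all p ∈ [0,1]. -/
/-- `G` contains no member of the family `𝓕` as an induced subgraph. -/
def InducedFree (𝓕 : ∀ k : ℕ, Set (SimpleGraph (Fin k))) {n : ℕ}
    (G : SimpleGraph (Fin n)) : Prop :=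
  ∀ k : ℕ, ∀ F ∈ 𝓕 k, ¬ ∃ φ : Fin k → Fin n, Function.Injective φ ∧
    ∀ a b, F.Adj a b ↔ G.Adj (φ a) (φ b)

/-- The normalized edit distance between two graphs on the same vertex set. -/
noncomputable def gdist {n : ℕ} (G H : SimpleGraph (Fin n)) : ℝ :=
  (symmDiff G.edgeSet H.edgeSet).ncard / (n.choose 2)

/-- The normalized edit distance from `G` to the hereditary property `Forb(𝓕)`. -/
noncomputable def distForb (𝓕 : ∀ k : ℕ, Set (SimpleGraph (Fin k))) {n : ℕ}
    (G : SimpleGraph (Fin n)) : ℝ :=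
  sInf {d : ℝ | ∃ H : SimpleGraph (Fin n), InducedFree 𝓕 H ∧ d = gdist G H}

/-- The maximum distance to `Forb(𝓕)` over `n`-vertex graphs of density `p`. -/
noncomputable def maxDist (𝓕 : ∀ k : ℕ, Set (SimpleGraph (Fin k))) (n : ℕ) (p : ℝ) : ℝ :=
  sSup {d : ℝ | ∃ G : SimpleGraph (Fin n),
    G.edgeSet.ncard = ⌊p * (n.choose 2 : ℝ)⌋₊ ∧ d = distForb 𝓕 G}

/-- The edit distance function of `Forb(𝓕)`. -/
noncomputable def edFun (𝓕 : ∀ k : ℕ, Set (SimpleGraph (Fin k))) (p : ℝ) : ℝ :=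
  Filter.limsup (fun n : ℕ => maxDist 𝓕 n p) Filter.atTop

open Finset

private def eqFunEquiv {n t : ℕ} {x y : Fin n} (hxy : x ≠ y) :
    {c : Fin n → Fin t // c x = c y} ≃ ({z : Fin n // z ≠ x} → Fin t) where
  toFun c z := c.1 z.1
  invFun g := ⟨fun z => if h : z = x then g ⟨y, hxy.symm⟩ else g ⟨z, h⟩, by
    simp [hxy.symm]⟩
  left_inv c := by
    apply Subtype.ext
    funext z
    by_cases h : z = x
    · subst h; simp [c.2.symm]
    · simp [h]
  right_inv g := by
    funext z
    simp [z.2]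

private lemma card_eqfun {n t : ℕ} {x y : Fin n} (hxy : x ≠ y) :
    (Finset.univ.filter (fun c : Fin n → Fin t => c x = c y)).card = t ^ (n - 1) := by
  rw [← Fintype.card_subtype]
  rw [Fintype.card_congr (eqFunEquiv hxy)]
  rw [Fintype.card_fun, Fintype.card_fin]
  congr 1
  have : Fintype.card {z : Fin n // z ≠ x} = Fintype.card {z : Fin n // ¬ z = x} := rfl
  rw [this, Fintype.card_subtype_compl, Fintype.card_subtype_eq, Fintype.card_fin]

private lemma avg {n t : ℕ} (ht : 1 ≤ t) (G : SimpleGraph (Fin n)) [DecidableRel G.Adj] :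
    ∃ c : Fin n → Fin t,
      t * (G.edgeFinset.filter (fun e => (e.map c).IsDiag)).card ≤ G.edgeFinset.card := by
  haveI : Nonempty (Fin t) := Fin.pos_iff_nonempty.mp ht
  let f : (Fin n → Fin t) → ℕ := fun c => (G.edgeFinset.filter (fun e => (e.map c).IsDiag)).card
  obtain ⟨c₀, -, hc₀⟩ := Finset.exists_min_image (Finset.univ : Finset (Fin n → Fin t))
    f ⟨Classical.arbitrary _, mem_univ _⟩
  refine ⟨c₀, ?_⟩
  have hsum : ∑ c : Fin n → Fin t, (G.edgeFinset.filter (fun e => (e.map c).IsDiag)).card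
      = G.edgeFinset.card * t ^ (n - 1) := by
    have : ∀ c : Fin n → Fin t, (G.edgeFinset.filter (fun e => (e.map c).IsDiag)).card
        = ∑ e ∈ G.edgeFinset, if (e.map c).IsDiag then 1 else 0 := fun c => Finset.card_filter _ _
    simp only [this]
    rw [Finset.sum_comm]
    have : ∀ e ∈ G.edgeFinset,
        (∑ c : Fin n → Fin t, if (e.map c).IsDiag then 1 else 0) = t ^ (n - 1) := by
      intro e he
      induction e with
      | _ x y =>
        rw [SimpleGraph.mem_edgeFinset, SimpleGraph.mem_edgeSet] at he
        have hxy : x ≠ y := he.ne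
        have : (∑ c : Fin n → Fin t, if (Sym2.map c s(x, y)).IsDiag then 1 else 0)
            = (Finset.univ.filter (fun c : Fin n → Fin t => c x = c y)).card := by
          rw [Finset.card_filter]
          refine Finset.sum_congr rfl fun c _ => ?_
          simp [Sym2.map_pair_eq, Sym2.isDiag_iff_proj_eq]
        rw [this, card_eqfun hxy]
    rw [Finset.sum_congr rfl this, Finset.sum_const, smul_eq_mul]
  have hlow : (t : ℕ) ^ n * (G.edgeFinset.filter (fun e => (e.map c₀).IsDiag)).card
      ≤ G.edgeFinset.card * t ^ (n - 1) := by
    rw [← hsum]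
    calc t ^ n * _ = ∑ _c : Fin n → Fin t,
          (G.edgeFinset.filter (fun e => (e.map c₀).IsDiag)).card := by
          rw [Finset.sum_const, card_univ, smul_eq_mul, Fintype.card_fun,
            Fintype.card_fin, Fintype.card_fin]
      _ ≤ _ := Finset.sum_le_sum fun c _ => hc₀ c (mem_univ c)
  rcases n with _ | m
  · have h0 : G.edgeFinset = ∅ := Finset.eq_empty_of_isEmpty _
    simp [h0]
  · have hpow : 0 < t ^ m := pow_pos ht m
    have : t ^ m * (t * (G.edgeFinset.filter (fun e => (e.map c₀).IsDiag)).card)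
        ≤ t ^ m * G.edgeFinset.card := by
      calc t ^ m * (t * _) = t ^ (m + 1) * _ := by ring
        _ ≤ G.edgeFinset.card * t ^ (m + 1 - 1) := hlow
        _ = t ^ m * G.edgeFinset.card := by simp [Nat.mul_comm]
    exact Nat.le_of_mul_le_mul_left this hpow

private def cut {n t : ℕ} (G : SimpleGraph (Fin n)) (c : Fin n → Fin t) :
    SimpleGraph (Fin n) where
  Adj a b := G.Adj a b ∧ c a ≠ c b
  symm := ⟨fun a b h => ⟨h.1.symm, Ne.symm h.2⟩⟩
  loopless := ⟨fun a h => G.loopless.irrefl a h.1⟩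

@[simp] private lemma cut_adj {n t : ℕ} (G : SimpleGraph (Fin n)) (c : Fin n → Fin t)
    (a b : Fin n) : (cut G c).Adj a b ↔ G.Adj a b ∧ c a ≠ c b := Iff.rfl

private lemma key (𝓕 : ∀ k : ℕ, Set (SimpleGraph (Fin k))) (χ : ℕ) (hχ2 : 2 ≤ χ)
    (hχ : ∀ k : ℕ, ∀ F ∈ 𝓕 k, (χ : ℕ∞) ≤ F.chromaticNumber) {n : ℕ} (G : SimpleGraph (Fin n)) :
    ∃ G' : SimpleGraph (Fin n), G' ≤ G ∧ InducedFree 𝓕 G' ∧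
      G'.edgeSet ⊆ G.edgeSet ∧
      (χ - 1) * (G.edgeSet \ G'.edgeSet).ncard ≤ G.edgeSet.ncard := by
  classical
  have ht : 1 ≤ χ - 1 := by omega
  obtain ⟨c, hc⟩ := avg (t := χ - 1) ht G
  refine ⟨cut G c, fun a b h => h.1, ?_, ?_, ?_⟩
  · rintro k F hF ⟨φ, hinj, hiff⟩
    have C : F.Coloring (Fin (χ - 1)) :=
      SimpleGraph.Coloring.mk (fun a => c (φ a)) (fun {a b} hab => ((hiff a b).mp hab).2)
    have h1 := C.colorable.chromaticNumber_le
    rw [Fintype.card_fin] at h1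
    have h2 : (χ : ℕ∞) ≤ (χ - 1 : ℕ) := le_trans (hχ k F hF) h1
    have := Nat.cast_le (α := ℕ∞) |>.mp h2
    omega
  · intro e he
    induction e with
    | _ x y => exact (he : _ ∧ _).1
  · have hset : (G.edgeSet \ (cut G c).edgeSet) =
        ↑(G.edgeFinset.filter (fun e => (e.map c).IsDiag)) := by
      ext e
      induction e with
      | _ x y =>
        simp only [Set.mem_diff, SimpleGraph.mem_edgeSet, Finset.coe_filter,
          Set.mem_setOf_eq, SimpleGraph.mem_edgeFinset, Sym2.map_pair_eq,
          Sym2.isDiag_iff_proj_eq]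
        constructor
        · rintro ⟨h1, h2⟩
          exact ⟨h1, by by_contra hne; exact h2 ⟨h1, hne⟩⟩
        · rintro ⟨h1, h2⟩
          exact ⟨h1, fun h => h.2 h2⟩
    rw [hset, Set.ncard_coe_finset, ← SimpleGraph.coe_edgeFinset, Set.ncard_coe_finset]
    exact hc

/-- if every member of `𝓕` has chromatic number at least `χ ≥ 2` (in
particular `𝓕` contains no anti-clique), then every graph `G` has a spanning subgraph `G′`
with no induced member of `𝓕` obtained by deleting at most `|E(G)|/(χ−1)` edges, and
consequently `ed_{Forb(𝓕)}(p) ≤ p/(χ−1)` for all `p ∈ [0,1]`. -/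
theorem stmt14 (𝓕 : ∀ k : ℕ, Set (SimpleGraph (Fin k))) (χ : ℕ) (hχ2 : 2 ≤ χ)
    (hχ : ∀ k : ℕ, ∀ F ∈ 𝓕 k, (χ : ℕ∞) ≤ F.chromaticNumber) :
    (∀ n : ℕ, ∀ G : SimpleGraph (Fin n), ∃ G' : SimpleGraph (Fin n), G' ≤ G ∧
      InducedFree 𝓕 G' ∧
      (G.edgeSet.ncard : ℝ) - (G'.edgeSet.ncard : ℝ) ≤ (G.edgeSet.ncard : ℝ) / ((χ : ℝ) - 1)) ∧
    (∀ p : ℝ, 0 ≤ p → p ≤ 1 → edFun 𝓕 p ≤ p / ((χ : ℝ) - 1)) := by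
  have hd : ((χ : ℝ) - 1) = ((χ - 1 : ℕ) : ℝ) := by
    rw [Nat.cast_sub (by omega : 1 ≤ χ), Nat.cast_one]
  have hdpos : (0 : ℝ) < (χ : ℝ) - 1 := by
    rw [hd]; exact_mod_cast Nat.lt_of_lt_of_le Nat.zero_lt_one (by omega : 1 ≤ χ - 1)
  have gdist_nonneg : ∀ n : ℕ, ∀ G H : SimpleGraph (Fin n), 0 ≤ gdist G H := by
    intro n G H
    exact div_nonneg (Nat.cast_nonneg _) (Nat.cast_nonneg _)
  constructor
  · intro n G
    obtain ⟨G', hle, hfree, hsub, hcount⟩ := key 𝓕 χ hχ2 hχ G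
    refine ⟨G', hle, hfree, ?_⟩
    have hfin : G.edgeSet.Finite := Set.toFinite _
    have hle' : G'.edgeSet.ncard ≤ G.edgeSet.ncard := Set.ncard_le_ncard hsub hfin
    have hdiff : (G.edgeSet \ G'.edgeSet).ncard = G.edgeSet.ncard - G'.edgeSet.ncard :=
      Set.ncard_diff hsub
    have hNat : (χ - 1) * (G.edgeSet.ncard - G'.edgeSet.ncard) ≤ G.edgeSet.ncard :=
      hdiff ▸ hcount
    rw [← Nat.cast_sub hle', le_div_iff₀ hdpos, hd]
    exact_mod_cast (Nat.mul_comm _ _ ▸ hNat)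
  · intro p hp0 hp1
    have hbd : 0 ≤ p / ((χ : ℝ) - 1) := div_nonneg hp0 hdpos.le
    have hmax : ∀ n : ℕ, maxDist 𝓕 n p ≤ p / ((χ : ℝ) - 1) := by
      intro n
      refine Real.sSup_le ?_ hbd
      rintro d ⟨G, hcard, rfl⟩
      obtain ⟨G', hle, hfree, hsub, hcount⟩ := key 𝓕 χ hχ2 hχ G
      have hmem : gdist G G' ∈
          {d : ℝ | ∃ H : SimpleGraph (Fin n), InducedFree 𝓕 H ∧ d = gdist G H} :=
        ⟨G', hfree, rfl⟩
      have hbdd : BddBelow {d : ℝ | ∃ H : SimpleGraph (Fin n), InducedFree 𝓕 H ∧ d = gdist G H} :=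
        ⟨0, by rintro x ⟨H, -, rfl⟩; exact gdist_nonneg n G H⟩
      refine le_trans (csInf_le hbdd hmem) ?_
      have hsymm : symmDiff G.edgeSet G'.edgeSet = G.edgeSet \ G'.edgeSet :=
        symmDiff_of_ge hsub
      rw [gdist, hsymm]
      rcases Nat.eq_zero_or_pos (n.choose 2) with hC | hC
      · simp [hC, hbd]
      · have hCpos : (0 : ℝ) < (n.choose 2 : ℝ) := by exact_mod_cast hC
        rw [div_le_div_iff₀ hCpos hdpos]
        have h1 : ((χ : ℝ) - 1) * ((G.edgeSet \ G'.edgeSet).ncard : ℝ)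
            ≤ (G.edgeSet.ncard : ℝ) := by
          rw [hd]; exact_mod_cast hcount
        have h2 : (G.edgeSet.ncard : ℝ) ≤ p * (n.choose 2 : ℝ) := by
          rw [hcard]
          exact Nat.floor_le (by positivity)
        nlinarith
    refine Filter.limsup_le_of_le ?_ (Filter.Eventually.of_forall hmax)
    refine Filter.isCoboundedUnder_le_of_le Filter.atTop (x := 0) fun n => ?_
    refine Real.sSup_nonneg ?_
    rintro d ⟨G, -, rfl⟩
    exact Real.sInf_nonneg (by rintro x ⟨H, -, rfl⟩; exact gdist_nonneg n G H)
end
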